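/- Let J_{m,i} be the band-diagonal Jacobi operator on ℓ² built from the recurrence matrices of an orthonormal graded polynomial system. If Σ_{n=0}^∞ 1/𝔐_{n,m,i} = ∞ where 𝔐_{n,m,i} = Σ_{k=1}^m Σ_{r=n+1}^{n+k} ‖M^k_{m+r−k,m,i}‖₂, then J_{m,i} is a symmetric (and in fact self-adjoint) unbounded operator on its natural domain. -/

import Mathlib

open scoped Classical RealInnerProductSpace
open scoped ENNReal NNReal

/- **Statement 11.**  Graded setting as before; `H(W) ≅ ℓ²` is modelled as
`lp (fun _ : Σ n, Mon N n => ℝ) 2`, with blocks indexed by the monomials of each total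
degree. -/

abbrev GIdx (N : ℕ → ℕ) := Σ m : ℕ, Fin (N m)

def tdeg {N : ℕ → ℕ} (α : GIdx N →₀ ℕ) : ℕ := α.sum fun s k => s.1 * k

def Mon (N : ℕ → ℕ) (n : ℕ) := {α : GIdx N →₀ ℕ // tdeg α = n}

section
variable (N : ℕ → ℕ) [∀ k, Fintype (Mon N k)]

/-- The symmetric recurrence of an orthonormal system for the generator `s = w_{m,i}`
(upper recurrence matrices `M n' j`, supported on the band `n' ≤ j ≤ n' + m`). -/
def RecurrenceON (p : (n : ℕ) → Mon N n → MvPolynomial (GIdx N) ℝ)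
    (s : GIdx N) (M : (n' j : ℕ) → Matrix (Mon N n') (Mon N j) ℝ) : Prop :=
  (∀ n' j : ℕ, (j < n' ∨ n' + s.1 < j) → M n' j = 0) ∧
  (∀ (n' : ℕ) (a : Mon N n'),
    MvPolynomial.X s * p n' a =
      (∑ j ∈ Finset.Icc n' (n' + s.1), ∑ b : Mon N j, M n' j a b • p j b) +
      ∑ k ∈ Finset.Icc 1 (min s.1 n'), ∑ b : Mon N (n' - k), M (n' - k) n' b a • p (n' - k) b)

/-- The ℓ²-operator (spectral) norm `‖·‖₂` of a real matrix. -/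
noncomputable def specNorm {α β : Type*} [Fintype α] [Fintype β]
    (A : Matrix α β ℝ) : ℝ :=
  ‖LinearMap.toContinuousLinearMap (Matrix.toEuclideanLin A)‖

/-- `𝔐_{n,m,i} = Σ_{k=1}^m Σ_{r=n+1}^{n+k} ‖M^k_{m+r−k,m,i}‖₂`
(`M^k_{m+r-k,m,i}` is, in absolute-degree indexing, the block `M (r-k) r`). -/
noncomputable def frakM (m : ℕ) (M : (n' j : ℕ) → Matrix (Mon N n') (Mon N j) ℝ)
    (n : ℕ) : ℝ :=
  ∑ k ∈ Finset.Icc 1 m, ∑ r ∈ Finset.Icc (n + 1) (n + k), specNorm (M (r - k) r)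

/-- The Jacobi operator `J_{m,i}`, acting (pointwise) on sequences indexed by
`Σ n, Mon N n`. -/
noncomputable def Jfun (s : GIdx N) (M : (n' j : ℕ) → Matrix (Mon N n') (Mon N j) ℝ)
    (f : (Σ n, Mon N n) → ℝ) : (Σ n, Mon N n) → ℝ :=
  fun x =>
    (∑ j ∈ Finset.Icc x.1 (x.1 + s.1), ∑ b : Mon N j, M x.1 j x.2 b * f ⟨j, b⟩) +
    ∑ k ∈ Finset.Icc 1 (min s.1 x.1), ∑ b : Mon N (x.1 - k),
      M (x.1 - k) x.1 b x.2 * f ⟨x.1 - k, b⟩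

end

namespace Jaux
set_option linter.unusedSectionVars false

variable {N : ℕ → ℕ} [∀ k, Fintype (Mon N k)]

/-- The symmetric kernel. -/
noncomputable def K (M : (n' j : ℕ) → Matrix (Mon N n') (Mon N j) ℝ)
    (x y : Σ n, Mon N n) : ℝ :=
  if x.1 ≤ y.1 then M x.1 y.1 x.2 y.2 else M y.1 x.1 y.2 x.2

theorem Mdiag {p : (n : ℕ) → Mon N n → MvPolynomial (GIdx N) ℝ}
    {ℒ : MvPolynomial (GIdx N) ℝ →ₗ[ℝ] ℝ}
    (horth : ∀ (n : ℕ) (a b : Mon N n), ℒ (p n a * p n b) = if a = b then 1 else 0)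
    (horth' : ∀ n k : ℕ, n ≠ k → ∀ (a : Mon N n) (b : Mon N k), ℒ (p n a * p k b) = 0)
    {s : GIdx N} {M : (n' j : ℕ) → Matrix (Mon N n') (Mon N j) ℝ}
    (hrec : RecurrenceON N p s M) (n : ℕ) (a b : Mon N n) :
    M n n a b = M n n b a := by
  have key : ∀ a b : Mon N n, ℒ (p n b * (MvPolynomial.X s * p n a)) = M n n a b := by
    intro a b
    rw [hrec.2 n a, mul_add, map_add]
    have h1 : ℒ (p n b * ∑ j ∈ Finset.Icc n (n + s.1), ∑ b' : Mon N j,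
        M n j a b' • p j b') = M n n a b := by
      rw [Finset.mul_sum]
      simp_rw [Finset.mul_sum, mul_smul_comm, map_sum, map_smul]
      rw [Finset.sum_eq_single n]
      · simp_rw [horth n b, smul_eq_mul, mul_ite, mul_one, mul_zero]
        rw [Finset.sum_ite_eq]
        simp
      · intro j hj hne
        have : ∀ b' : Mon N j, ℒ (p n b * p j b') = 0 := fun b' =>
          horth' n j (Ne.symm hne) b b'
        simp [this]
      · intro h
        exact absurd (Finset.mem_Icc.2 ⟨le_refl n, Nat.le_add_right n s.1⟩) h
    have h2 : ℒ (p n b * ∑ k ∈ Finset.Icc 1 (min s.1 n), ∑ b' : Mon N (n - k),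
        M (n - k) n b' a • p (n - k) b') = 0 := by
      rw [Finset.mul_sum]
      simp_rw [Finset.mul_sum, mul_smul_comm, map_sum, map_smul]
      apply Finset.sum_eq_zero
      intro k hk
      apply Finset.sum_eq_zero
      intro b' _
      have hkk := Finset.mem_Icc.1 hk
      have : ℒ (p n b * p (n - k) b') = 0 :=
        horth' n (n - k) (by omega) b b'
      simp [this]
    rw [h1, h2, add_zero]
  have hab := key a b
  have hba := key b a
  rw [← hab, ← hba]
  ring_nf

theorem K_symm {M : (n' j : ℕ) → Matrix (Mon N n') (Mon N j) ℝ}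
    (hdiag : ∀ n (a b : Mon N n), M n n a b = M n n b a) (x y : Σ n, Mon N n) :
    K M x y = K M y x := by
  by_cases h1 : x.1 ≤ y.1 <;> by_cases h2 : y.1 ≤ x.1
  · obtain ⟨n1, a⟩ := x
    obtain ⟨n2, b⟩ := y
    simp only at h1 h2
    have he : n1 = n2 := le_antisymm h1 h2
    subst he
    simp only [K, le_refl, if_pos]
    exact hdiag n1 a b
  · simp [K, h1, h2]
  · simp [K, h1, h2]
  · exact absurd (le_total x.1 y.1) (by simp [h1, h2])

theorem K_zero {m : ℕ} {M : (n' j : ℕ) → Matrix (Mon N n') (Mon N j) ℝ}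
    (h0 : ∀ n' j : ℕ, (j < n' ∨ n' + m < j) → M n' j = 0)
    {x y : Σ n, Mon N n} (h : x.1 + m < y.1 ∨ y.1 + m < x.1) :
    K M x y = 0 := by
  unfold K
  split_ifs with h1
  · rw [h0 x.1 y.1 (Or.inr (by omega))]
    simp
  · rw [h0 y.1 x.1 (Or.inr (by omega))]
    simp

theorem Jexpand {s : GIdx N} {M : (n' j : ℕ) → Matrix (Mon N n') (Mon N j) ℝ}
    (h0 : ∀ n' j : ℕ, (j < n' ∨ n' + s.1 < j) → M n' j = 0)
    (f : (Σ n, Mon N n) → ℝ) (x : Σ n, Mon N n) {L : ℕ} (hL : x.1 + s.1 ≤ L) :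
    Jfun N s M f x =
      ∑ j ∈ Finset.range (L + 1), ∑ b : Mon N j, K M x ⟨j, b⟩ * f ⟨j, b⟩ := by
  obtain ⟨q, a⟩ := x
  simp only at hL
  rw [Finset.range_eq_Ico,
    ← Finset.sum_Ico_consecutive _ (Nat.zero_le q) (by omega : q ≤ L + 1)]
  have piece2 : ∑ j ∈ Finset.Ico q (L + 1), ∑ b : Mon N j,
      K M ⟨q, a⟩ ⟨j, b⟩ * f ⟨j, b⟩ =
      ∑ j ∈ Finset.Icc q (q + s.1), ∑ b : Mon N j, M q j a b * f ⟨j, b⟩ := by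
    have e0 : ∑ j ∈ Finset.Ico q (L + 1), ∑ b : Mon N j,
        K M ⟨q, a⟩ ⟨j, b⟩ * f ⟨j, b⟩ =
        ∑ j ∈ Finset.Ico q (L + 1), ∑ b : Mon N j, M q j a b * f ⟨j, b⟩ := by
      apply Finset.sum_congr rfl
      intro j hj
      simp only [Finset.mem_Ico] at hj
      apply Finset.sum_congr rfl
      intro b _
      unfold K
      rw [if_pos (show q ≤ j from hj.1)]
    rw [e0]
    have hsub : Finset.Icc q (q + s.1) ⊆ Finset.Ico q (L + 1) := by
      intro j hj
      simp only [Finset.mem_Icc] at hj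
      exact Finset.mem_Ico.2 ⟨hj.1, by omega⟩
    have hzero : ∀ j ∈ Finset.Ico q (L + 1), j ∉ Finset.Icc q (q + s.1) →
        (∑ b : Mon N j, M q j a b * f ⟨j, b⟩) = 0 := by
      intro j hj hj'
      simp only [Finset.mem_Ico] at hj
      simp only [Finset.mem_Icc] at hj'
      have hm : M q j = 0 := h0 q j (Or.inr (by omega))
      simp [hm]
    exact (Finset.sum_subset hsub hzero).symm
  have piece1 : ∑ j ∈ Finset.Ico 0 q, ∑ b : Mon N j,
      K M ⟨q, a⟩ ⟨j, b⟩ * f ⟨j, b⟩ =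
      ∑ k ∈ Finset.Icc 1 (min s.1 q), ∑ b : Mon N (q - k),
        M (q - k) q b a * f ⟨q - k, b⟩ := by
    have e1 : ∑ j ∈ Finset.Ico 0 q, ∑ b : Mon N j,
        K M ⟨q, a⟩ ⟨j, b⟩ * f ⟨j, b⟩ =
        ∑ j ∈ Finset.Ico 0 q, ∑ b : Mon N j, M j q b a * f ⟨j, b⟩ := by
      apply Finset.sum_congr rfl
      intro j hj
      simp only [Finset.mem_Ico] at hj
      apply Finset.sum_congr rfl
      intro b _
      unfold K
      rw [if_neg (show ¬ q ≤ j by omega)]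
    rw [e1]
    have e2 : ∑ j ∈ Finset.Ico 0 q, ∑ b : Mon N j, M j q b a * f ⟨j, b⟩ =
        ∑ k ∈ Finset.Icc 1 q, ∑ b : Mon N (q - k), M (q - k) q b a * f ⟨q - k, b⟩ := by
      apply Finset.sum_nbij' (fun j => q - j) (fun k => q - k)
      · intro j hj; simp only [Finset.mem_Ico] at hj; simp only [Finset.mem_Icc]; omega
      · intro k hk; simp only [Finset.mem_Icc] at hk; simp only [Finset.mem_Ico]; omega
      · intro j hj; simp only [Finset.mem_Ico] at hj; omega
      · intro k hk; simp only [Finset.mem_Icc] at hk; omega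
      · intro j hj
        simp only [Finset.mem_Ico] at hj
        have h3 : q - (q - j) = j := by omega
        rw [h3]
    rw [e2]
    symm
    apply Finset.sum_subset
    · intro k hk
      simp only [Finset.mem_Icc] at hk ⊢
      omega
    · intro k hk hk'
      simp only [Finset.mem_Icc] at hk hk'
      have : M (q - k) q = 0 := h0 (q - k) q (Or.inr (by omega))
      simp [this]
  rw [piece1, piece2]
  show _ = _ + _
  rw [add_comm]
  rfl


noncomputable def W (M : (n' j : ℕ) → Matrix (Mon N n') (Mon N j) ℝ)
    (f g : (Σ n, Mon N n) → ℝ) (q r : ℕ) : ℝ :=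
  ∑ a : Mon N q, ∑ b : Mon N r,
    K M ⟨q, a⟩ ⟨r, b⟩ * (f ⟨r, b⟩ * g ⟨q, a⟩ - g ⟨r, b⟩ * f ⟨q, a⟩)

theorem W_antisymm {M : (n' j : ℕ) → Matrix (Mon N n') (Mon N j) ℝ}
    (hdiag : ∀ n (a b : Mon N n), M n n a b = M n n b a)
    (f g : (Σ n, Mon N n) → ℝ) (q r : ℕ) :
    W M f g r q = - W M f g q r := by
  unfold W
  rw [Finset.sum_comm, ← Finset.sum_neg_distrib]
  apply Finset.sum_congr rfl
  intro a _
  rw [← Finset.sum_neg_distrib]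
  apply Finset.sum_congr rfl
  intro b _
  rw [K_symm hdiag]
  ring

theorem W_zero {m : ℕ} {M : (n' j : ℕ) → Matrix (Mon N n') (Mon N j) ℝ}
    (h0 : ∀ n' j : ℕ, (j < n' ∨ n' + m < j) → M n' j = 0)
    (f g : (Σ n, Mon N n) → ℝ) {q r : ℕ} (h : q + m < r ∨ r + m < q) :
    W M f g q r = 0 := by
  unfold W
  apply Finset.sum_eq_zero
  intro a _
  apply Finset.sum_eq_zero
  intro b _
  rw [K_zero h0 (by simpa using h), zero_mul]

theorem sq_cancel {M : (n' j : ℕ) → Matrix (Mon N n') (Mon N j) ℝ}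
    (hdiag : ∀ n (a b : Mon N n), M n n a b = M n n b a)
    (f g : (Σ n, Mon N n) → ℝ) (n : ℕ) :
    ∑ q ∈ Finset.range n, ∑ r ∈ Finset.range n, W M f g q r = 0 := by
  have h : (∑ q ∈ Finset.range n, ∑ r ∈ Finset.range n, W M f g q r) =
      - ∑ q ∈ Finset.range n, ∑ r ∈ Finset.range n, W M f g q r := by
    conv_lhs => rw [Finset.sum_comm]
    rw [← Finset.sum_neg_distrib]
    apply Finset.sum_congr rfl
    intro q _
    rw [← Finset.sum_neg_distrib]
    apply Finset.sum_congr rfl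
    intro r _
    exact W_antisymm hdiag f g q r
  linarith

/-- truncated pairing -/
noncomputable def Pn (n : ℕ) (h h' : (Σ n, Mon N n) → ℝ) : ℝ :=
  ∑ q ∈ Finset.range (n + 1), ∑ a : Mon N q, h ⟨q, a⟩ * h' ⟨q, a⟩

theorem Pn_sub {s : GIdx N} {M : (n' j : ℕ) → Matrix (Mon N n') (Mon N j) ℝ}
    (h0 : ∀ n' j : ℕ, (j < n' ∨ n' + s.1 < j) → M n' j = 0)
    (f g : (Σ n, Mon N n) → ℝ) (n : ℕ) :
    Pn n (Jfun N s M f) g - Pn n f (Jfun N s M g) =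
      ∑ q ∈ Finset.range (n + 1), ∑ r ∈ Finset.range (n + s.1 + 1), W M f g q r := by
  unfold Pn
  rw [← Finset.sum_sub_distrib]
  apply Finset.sum_congr rfl
  intro q hq
  simp only [Finset.mem_range] at hq
  have eJf : ∀ a : Mon N q, Jfun N s M f ⟨q, a⟩ =
      ∑ r ∈ Finset.range (n + s.1 + 1), ∑ b : Mon N r, K M ⟨q, a⟩ ⟨r, b⟩ * f ⟨r, b⟩ :=
    fun a => Jexpand h0 f ⟨q, a⟩ (by simp only; omega)
  have eJg : ∀ a : Mon N q, Jfun N s M g ⟨q, a⟩ =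
      ∑ r ∈ Finset.range (n + s.1 + 1), ∑ b : Mon N r, K M ⟨q, a⟩ ⟨r, b⟩ * g ⟨r, b⟩ :=
    fun a => Jexpand h0 g ⟨q, a⟩ (by simp only; omega)
  simp_rw [eJf, eJg, Finset.sum_mul, Finset.mul_sum]
  rw [Finset.sum_comm (s := Finset.univ), Finset.sum_comm (s := Finset.univ),
    ← Finset.sum_sub_distrib]
  unfold W
  apply Finset.sum_congr rfl
  intro r _
  rw [← Finset.sum_sub_distrib]
  apply Finset.sum_congr rfl
  intro a _
  rw [← Finset.sum_sub_distrib]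
  apply Finset.sum_congr rfl
  intro b _
  ring

theorem Dn_eq {s : GIdx N} {M : (n' j : ℕ) → Matrix (Mon N n') (Mon N j) ℝ}
    (hdiag : ∀ n (a b : Mon N n), M n n a b = M n n b a)
    (h0 : ∀ n' j : ℕ, (j < n' ∨ n' + s.1 < j) → M n' j = 0)
    (f g : (Σ n, Mon N n) → ℝ) (n : ℕ) :
    Pn n (Jfun N s M f) g - Pn n f (Jfun N s M g) =
      ∑ q ∈ Finset.Icc (n + 1 - s.1) n, ∑ r ∈ Finset.Icc (n + 1) (n + s.1),
        W M f g q r := by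
  rw [Pn_sub h0]
  have hsplit : ∀ q : ℕ, ∑ r ∈ Finset.range (n + s.1 + 1), W M f g q r =
      (∑ r ∈ Finset.range (n + 1), W M f g q r) +
      ∑ r ∈ Finset.Icc (n + 1) (n + s.1), W M f g q r := by
    intro q
    rw [Finset.range_eq_Ico, Finset.range_eq_Ico, ← Finset.Ico_add_one_right_eq_Icc]
    exact (Finset.sum_Ico_consecutive (fun r => W M f g q r) (by omega : 0 ≤ n + 1) (by omega : n + 1 ≤ n + s.1 + 1)).symm
  simp_rw [hsplit, Finset.sum_add_distrib]
  rw [sq_cancel hdiag f g (n + 1), zero_add]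
  symm
  apply Finset.sum_subset
  · intro q hq
    simp only [Finset.mem_Icc] at hq
    simp only [Finset.mem_range]
    omega
  · intro q hq hq'
    simp only [Finset.mem_range] at hq
    simp only [Finset.mem_Icc] at hq'
    apply Finset.sum_eq_zero
    intro r hr
    simp only [Finset.mem_Icc] at hr
    exact W_zero h0 f g (Or.inl (by omega))


theorem specNorm_nonneg {α β : Type*} [Fintype α] [Fintype β] (A : Matrix α β ℝ) :
    0 ≤ specNorm A := norm_nonneg _

theorem specNorm_zero {α β : Type*} [Fintype α] [Fintype β] :
    specNorm (0 : Matrix α β ℝ) = 0 := by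
  unfold specNorm
  rw [map_zero, map_zero, norm_zero]

theorem bilin_bound {α β : Type*} [Fintype α] [Fintype β] (A : Matrix α β ℝ)
    (u : β → ℝ) (v : α → ℝ) :
    |∑ a : α, ∑ b : β, A a b * u b * v a| ≤
      specNorm A * (Real.sqrt (∑ b : β, u b ^ 2) * Real.sqrt (∑ a : α, v a ^ 2)) := by
  classical
  set U : EuclideanSpace ℝ β := (WithLp.equiv 2 (β → ℝ)).symm u with hU
  set V : EuclideanSpace ℝ α := (WithLp.equiv 2 (α → ℝ)).symm v with hV
  have key : ∑ a : α, ∑ b : β, A a b * u b * v a = ⟪Matrix.toEuclideanLin A U, V⟫ := by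
    rw [PiLp.inner_apply]
    apply Finset.sum_congr rfl
    intro a _
    rw [RCLike.inner_apply]
    have : (Matrix.toEuclideanLin A U) a = ∑ b : β, A a b * u b := by
      rw [hU]
      rfl
    rw [this]
    simp only [starRingEnd_apply, star_trivial, Finset.sum_mul]
    rw [Finset.mul_sum]
    exact Finset.sum_congr rfl fun b _ => by rw [hV]; show _ = v a * _; ring
  rw [key]
  have h1 : |⟪Matrix.toEuclideanLin A U, V⟫| ≤ ‖Matrix.toEuclideanLin A U‖ * ‖V‖ :=
    abs_real_inner_le_norm _ _
  have h2 : ‖Matrix.toEuclideanLin A U‖ ≤ specNorm A * ‖U‖ := by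
    have := (LinearMap.toContinuousLinearMap (Matrix.toEuclideanLin A)).le_opNorm U
    simpa [specNorm] using this
  have hUnorm : ‖U‖ = Real.sqrt (∑ b : β, u b ^ 2) := by
    rw [EuclideanSpace.norm_eq]
    congr 1
    apply Finset.sum_congr rfl
    intro b _
    rw [Real.norm_eq_abs, sq_abs]
    rfl
  have hVnorm : ‖V‖ = Real.sqrt (∑ a : α, v a ^ 2) := by
    rw [EuclideanSpace.norm_eq]
    congr 1
    apply Finset.sum_congr rfl
    intro a _
    rw [Real.norm_eq_abs, sq_abs]
    rfl
  calc |⟪Matrix.toEuclideanLin A U, V⟫| ≤ ‖Matrix.toEuclideanLin A U‖ * ‖V‖ := h1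
    _ ≤ (specNorm A * ‖U‖) * ‖V‖ := by
        apply mul_le_mul_of_nonneg_right h2 (norm_nonneg _)
    _ = specNorm A * (Real.sqrt (∑ b : β, u b ^ 2) * Real.sqrt (∑ a : α, v a ^ 2)) := by
        rw [hUnorm, hVnorm, mul_assoc]


/-- block square norms -/
noncomputable def B (f : (Σ n, Mon N n) → ℝ) (u : ℕ) : ℝ := ∑ b : Mon N u, f ⟨u, b⟩ ^ 2

theorem B_nonneg (f : (Σ n, Mon N n) → ℝ) (u : ℕ) : 0 ≤ B f u :=
  Finset.sum_nonneg fun _ _ => sq_nonneg _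

/-- local tail -/
noncomputable def tTail (m : ℕ) (f g : (Σ n, Mon N n) → ℝ) (n : ℕ) : ℝ :=
  ∑ u ∈ Finset.Icc (n - m) (n + m), (B f u + B g u)

theorem tTail_nonneg (m : ℕ) (f g : (Σ n, Mon N n) → ℝ) (n : ℕ) : 0 ≤ tTail m f g n :=
  Finset.sum_nonneg fun u _ => add_nonneg (B_nonneg f u) (B_nonneg g u)

theorem sqrt_mul_le {x y : ℝ} (hx : 0 ≤ x) (hy : 0 ≤ y) :
    Real.sqrt x * Real.sqrt y ≤ (x + y) / 2 := by
  nlinarith [sq_nonneg (Real.sqrt x - Real.sqrt y), Real.sq_sqrt hx, Real.sq_sqrt hy,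
    Real.sqrt_nonneg x, Real.sqrt_nonneg y]

theorem W_bound {m : ℕ} {M : (n' j : ℕ) → Matrix (Mon N n') (Mon N j) ℝ}
    (f g : (Σ n, Mon N n) → ℝ) {n q r : ℕ}
    (h3 : n - m ≤ q) (hq : q ≤ n) (h1 : n < r) (h2 : r ≤ n + m) :
    |W M f g q r| ≤ specNorm (M q r) * tTail m f g n := by
  have hsN := specNorm_nonneg (M q r)
  have split : W M f g q r =
      (∑ a : Mon N q, ∑ b : Mon N r, M q r a b * f ⟨r, b⟩ * g ⟨q, a⟩) -
      (∑ a : Mon N q, ∑ b : Mon N r, M q r a b * g ⟨r, b⟩ * f ⟨q, a⟩) := by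
    unfold W
    rw [← Finset.sum_sub_distrib]
    apply Finset.sum_congr rfl
    intro a _
    rw [← Finset.sum_sub_distrib]
    apply Finset.sum_congr rfl
    intro b _
    simp only [K]
    rw [if_pos (show q ≤ r by omega)]
    ring
  have b1 := bilin_bound (M q r) (fun b => f ⟨r, b⟩) (fun a => g ⟨q, a⟩)
  have b2 := bilin_bound (M q r) (fun b => g ⟨r, b⟩) (fun a => f ⟨q, a⟩)
  have e1 : Real.sqrt (∑ b : Mon N r, f ⟨r, b⟩ ^ 2) *
      Real.sqrt (∑ a : Mon N q, g ⟨q, a⟩ ^ 2) ≤ (B f r + B g q) / 2 :=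
    sqrt_mul_le (B_nonneg f r) (B_nonneg g q)
  have e2 : Real.sqrt (∑ b : Mon N r, g ⟨r, b⟩ ^ 2) *
      Real.sqrt (∑ a : Mon N q, f ⟨q, a⟩ ^ 2) ≤ (B g r + B f q) / 2 :=
    sqrt_mul_le (B_nonneg g r) (B_nonneg f q)
  have hcq : B f q + B g q ≤ tTail m f g n :=
    Finset.single_le_sum (f := fun u => B f u + B g u)
      (fun u _ => add_nonneg (B_nonneg f u) (B_nonneg g u))
      (Finset.mem_Icc.2 ⟨h3, by omega⟩)
  have hcr : B f r + B g r ≤ tTail m f g n :=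
    Finset.single_le_sum (f := fun u => B f u + B g u)
      (fun u _ => add_nonneg (B_nonneg f u) (B_nonneg g u))
      (Finset.mem_Icc.2 ⟨by omega, h2⟩)
  calc |W M f g q r| ≤
      |∑ a : Mon N q, ∑ b : Mon N r, M q r a b * f ⟨r, b⟩ * g ⟨q, a⟩| +
      |∑ a : Mon N q, ∑ b : Mon N r, M q r a b * g ⟨r, b⟩ * f ⟨q, a⟩| := by
        rw [split]; exact abs_sub _ _
    _ ≤ specNorm (M q r) * ((B f r + B g q) / 2) +
        specNorm (M q r) * ((B g r + B f q) / 2) := by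
        apply add_le_add
        · exact b1.trans (mul_le_mul_of_nonneg_left e1 hsN)
        · exact b2.trans (mul_le_mul_of_nonneg_left e2 hsN)
    _ ≤ specNorm (M q r) * tTail m f g n := by
        rw [← mul_add]
        apply mul_le_mul_of_nonneg_left _ hsN
        linarith

/-- The main defect bound. -/
theorem Dn_bound {s : GIdx N} {M : (n' j : ℕ) → Matrix (Mon N n') (Mon N j) ℝ}
    (hdiag : ∀ n (a b : Mon N n), M n n a b = M n n b a)
    (h0 : ∀ n' j : ℕ, (j < n' ∨ n' + s.1 < j) → M n' j = 0)
    (f g : (Σ n, Mon N n) → ℝ) (n : ℕ) :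
    |Pn n (Jfun N s M f) g - Pn n f (Jfun N s M g)| ≤
      frakM N s.1 M n * tTail s.1 f g n := by
  have ht := tTail_nonneg s.1 f g n
  rw [Dn_eq hdiag h0]
  have step1 : |∑ q ∈ Finset.Icc (n + 1 - s.1) n, ∑ r ∈ Finset.Icc (n + 1) (n + s.1),
      W M f g q r| ≤ ∑ q ∈ Finset.Icc (n + 1 - s.1) n, ∑ r ∈ Finset.Icc (n + 1) (n + s.1),
      |W M f g q r| :=
    (Finset.abs_sum_le_sum_abs _ _).trans
      (Finset.sum_le_sum fun q _ => Finset.abs_sum_le_sum_abs _ _)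
  have step2 : ∑ q ∈ Finset.Icc (n + 1 - s.1) n, ∑ r ∈ Finset.Icc (n + 1) (n + s.1),
      |W M f g q r| ≤ ∑ q ∈ Finset.Icc (n + 1 - s.1) n, ∑ r ∈ Finset.Icc (n + 1) (n + s.1),
      specNorm (M q r) * tTail s.1 f g n := by
    apply Finset.sum_le_sum
    intro q hq
    apply Finset.sum_le_sum
    intro r hr
    simp only [Finset.mem_Icc] at hq hr
    by_cases hband : r ≤ q + s.1
    · exact W_bound f g (by omega) hq.2 (by omega) hr.2
    · rw [W_zero h0 f g (Or.inl (by omega)), abs_zero]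
      exact mul_nonneg (specNorm_nonneg _) ht
  have step3 : ∑ q ∈ Finset.Icc (n + 1 - s.1) n, ∑ r ∈ Finset.Icc (n + 1) (n + s.1),
      specNorm (M q r) * tTail s.1 f g n =
      (∑ q ∈ Finset.Icc (n + 1 - s.1) n, ∑ r ∈ Finset.Icc (n + 1) (n + s.1),
        specNorm (M q r)) * tTail s.1 f g n := by
    rw [Finset.sum_mul]
    apply Finset.sum_congr rfl
    intro q _
    rw [Finset.sum_mul]
  have step4 : ∑ q ∈ Finset.Icc (n + 1 - s.1) n, ∑ r ∈ Finset.Icc (n + 1) (n + s.1),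
      specNorm (M q r) ≤ frakM N s.1 M n := by
    rw [Finset.sum_sigma']
    unfold frakM
    rw [Finset.sum_sigma']
    set S : Finset ((_ : ℕ) × ℕ) :=
      ((Finset.Icc (n + 1 - s.1) n).sigma fun _ => Finset.Icc (n + 1) (n + s.1)).filter
        (fun p => p.2 ≤ p.1 + s.1) with hS
    have hfilter : ∑ p ∈ (Finset.Icc (n + 1 - s.1) n).sigma
        (fun _ => Finset.Icc (n + 1) (n + s.1)), specNorm (M p.1 p.2) =
        ∑ p ∈ S, specNorm (M p.1 p.2) := by
      symm
      apply Finset.sum_subset (Finset.filter_subset _ _)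
      intro p hp hp'
      simp only [hS, Finset.mem_filter, Finset.mem_sigma, Finset.mem_Icc] at hp hp'
      rw [h0 p.1 p.2 (Or.inr (by omega))]
      exact specNorm_zero
    rw [hfilter]
    have himg : ∑ p ∈ S, specNorm (M p.1 p.2) =
        ∑ x ∈ S.image (fun p : (_ : ℕ) × ℕ => (⟨p.2 - p.1, p.2⟩ : (_ : ℕ) × ℕ)),
          specNorm (M (x.2 - x.1) x.2) := by
      rw [Finset.sum_image]
      · apply Finset.sum_congr rfl
        intro p hp
        simp only [hS, Finset.mem_filter, Finset.mem_sigma, Finset.mem_Icc] at hp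
        have : p.2 - (p.2 - p.1) = p.1 := by omega
        rw [this]
      · intro p hp p' hp' h
        simp only [hS, Finset.mem_coe, Finset.mem_filter, Finset.mem_sigma, Finset.mem_Icc] at hp hp'
        obtain ⟨q, r⟩ := p
        obtain ⟨q', r'⟩ := p'
        simp only at hp hp'
        injection h with h1 h2
        dsimp only at h1 h2
        have h2' : r = r' := h2
        have h1'' : r - q = r' - q' := h1
        have h1' : q = q' := by omega
        subst h2'
        subst h1'
        rfl
    rw [himg]
    apply Finset.sum_le_sum_of_subset_of_nonneg
    · intro x hx
      simp only [Finset.mem_image] at hx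
      obtain ⟨p, hp, hpe⟩ := hx
      simp only [hS, Finset.mem_filter, Finset.mem_sigma, Finset.mem_Icc] at hp
      obtain ⟨q, r⟩ := p
      simp only at hp
      rw [← hpe]
      simp only [Finset.mem_sigma, Finset.mem_Icc]
      omega
    · intro x _ _
      exact specNorm_nonneg _
  calc |∑ q ∈ Finset.Icc (n + 1 - s.1) n, ∑ r ∈ Finset.Icc (n + 1) (n + s.1), W M f g q r|
      ≤ ∑ q ∈ Finset.Icc (n + 1 - s.1) n, ∑ r ∈ Finset.Icc (n + 1) (n + s.1),
        |W M f g q r| := step1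
    _ ≤ ∑ q ∈ Finset.Icc (n + 1 - s.1) n, ∑ r ∈ Finset.Icc (n + 1) (n + s.1),
        specNorm (M q r) * tTail s.1 f g n := step2
    _ = (∑ q ∈ Finset.Icc (n + 1 - s.1) n, ∑ r ∈ Finset.Icc (n + 1) (n + s.1),
        specNorm (M q r)) * tTail s.1 f g n := step3
    _ ≤ frakM N s.1 M n * tTail s.1 f g n := mul_le_mul_of_nonneg_right step4 ht


theorem frakM_nonneg (m : ℕ) (M : (n' j : ℕ) → Matrix (Mon N n') (Mon N j) ℝ) (n : ℕ) :
    0 ≤ frakM N m M n :=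
  Finset.sum_nonneg fun k _ => Finset.sum_nonneg fun r _ => specNorm_nonneg _

theorem Pn_tendsto (F G : lp (fun _ : Σ n, Mon N n => ℝ) 2) :
    Filter.Tendsto (fun n => Pn n ⇑F ⇑G) Filter.atTop (nhds ⟪F, G⟫) := by
  have h := lp.hasSum_inner (𝕜 := ℝ) F G
  have h' : HasSum (fun x : Σ n, Mon N n => F x * G x) ⟪F, G⟫ := by
    simpa [RCLike.inner_apply, starRingEnd_apply, star_trivial, mul_comm] using h
  have hsig : HasSum (fun n : ℕ => ∑ a : Mon N n, F ⟨n, a⟩ * G ⟨n, a⟩) ⟪F, G⟫ :=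
    h'.sigma fun n => hasSum_fintype _
  exact hsig.tendsto_sum_nat.comp (Filter.tendsto_add_atTop_nat 1)

theorem B_summable (F : lp (fun _ : Σ n, Mon N n => ℝ) 2) : Summable (B ⇑F) := by
  have hmem : Memℓp (⇑F) 2 := lp.memℓp F
  have hsum := hmem.summable (by norm_num : 0 < (2 : ℝ≥0∞).toReal)
  have hF : Summable fun x : Σ n, Mon N n => (F x) ^ 2 := by
    have he : ∀ x : Σ n, Mon N n, ‖F x‖ ^ (2 : ℝ≥0∞).toReal = (F x) ^ 2 := by
      intro x
      rw [show ((2 : ℝ≥0∞).toReal) = ((2 : ℕ) : ℝ) by norm_num, Real.rpow_natCast,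
        Real.norm_eq_abs, sq_abs]
    simpa [he] using hsum
  exact ⟨_, hF.hasSum.sigma fun n => hasSum_fintype _⟩

theorem tTail_summable (m : ℕ) {f g : (Σ n, Mon N n) → ℝ}
    (hf : Summable (B f)) (hg : Summable (B g)) : Summable (tTail m f g) := by
  set c : ℕ → ℝ := fun u => B f u + B g u with hc
  have hcs : Summable c := hf.add hg
  have hcnn : ∀ u, 0 ≤ c u := fun u => add_nonneg (B_nonneg f u) (B_nonneg g u)
  have hbig : Summable fun n : ℕ => ∑ k ∈ Finset.range (2 * m + 1), c (n - m + k) := by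
    apply summable_sum
    intro k _
    have h1 : Summable fun n : ℕ => c (n + k) := (summable_nat_add_iff k).2 hcs
    have h2 : Summable fun n : ℕ => c (n + m - m + k) := by
      simpa [Nat.add_sub_cancel] using h1
    exact (summable_nat_add_iff m).1 h2
  apply Summable.of_nonneg_of_le (tTail_nonneg m f g) _ hbig
  intro n
  have hsub : Finset.Icc (n - m) (n + m) ⊆
      (Finset.range (2 * m + 1)).image (fun k => n - m + k) := by
    intro u hu
    simp only [Finset.mem_Icc] at hu
    simp only [Finset.mem_image, Finset.mem_range]
    exact ⟨u - (n - m), by omega, by omega⟩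
  calc tTail m f g n ≤ ∑ u ∈ (Finset.range (2 * m + 1)).image (fun k => n - m + k), c u :=
      Finset.sum_le_sum_of_subset_of_nonneg hsub (fun u _ _ => hcnn u)
    _ = ∑ k ∈ Finset.range (2 * m + 1), c (n - m + k) :=
      Finset.sum_image (fun a _ b _ h => by omega)


open Filter in
theorem symm_main {s : GIdx N} {M : (n' j : ℕ) → Matrix (Mon N n') (Mon N j) ℝ}
    (hdiag : ∀ n (a b : Mon N n), M n n a b = M n n b a)
    (h0 : ∀ n' j : ℕ, (j < n' ∨ n' + s.1 < j) → M n' j = 0)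
    (hCarleman : ¬ Summable fun n : ℕ => (frakM N s.1 M n)⁻¹)
    (f g : lp (fun _ : Σ n, Mon N n => ℝ) 2)
    (hf : Jfun N s M ⇑f ∈ lp (fun _ : Σ n, Mon N n => ℝ) 2)
    (hg : Jfun N s M ⇑g ∈ lp (fun _ : Σ n, Mon N n => ℝ) 2) :
    ⟪(⟨Jfun N s M ⇑f, hf⟩ : lp (fun _ : Σ n, Mon N n => ℝ) 2), g⟫ =
    ⟪f, (⟨Jfun N s M ⇑g, hg⟩ : lp (fun _ : Σ n, Mon N n => ℝ) 2)⟫ := by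
  set F : lp (fun _ : Σ n, Mon N n => ℝ) 2 := ⟨Jfun N s M ⇑f, hf⟩ with hF
  set G : lp (fun _ : Σ n, Mon N n => ℝ) 2 := ⟨Jfun N s M ⇑g, hg⟩ with hG
  by_contra hne
  apply hCarleman
  set D : ℝ := ⟪F, g⟫ - ⟪f, G⟫ with hDdef
  have hDne : D ≠ 0 := sub_ne_zero.2 hne
  have hpos : 0 < |D| := abs_pos.2 hDne
  have h1 : Tendsto (fun n => Pn n (⇑F) ⇑g) atTop (nhds ⟪F, g⟫) := Pn_tendsto F g
  have h2 : Tendsto (fun n => Pn n ⇑f ⇑G) atTop (nhds ⟪f, G⟫) := Pn_tendsto f G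
  have hDt : Tendsto (fun n => Pn n (Jfun N s M ⇑f) ⇑g - Pn n ⇑f (Jfun N s M ⇑g))
      atTop (nhds D) := h1.sub h2
  have habs : Tendsto (fun n => |Pn n (Jfun N s M ⇑f) ⇑g - Pn n ⇑f (Jfun N s M ⇑g)|)
      atTop (nhds |D|) := hDt.abs
  have hev : ∀ᶠ n in atTop,
      |D| / 2 ≤ |Pn n (Jfun N s M ⇑f) ⇑g - Pn n ⇑f (Jfun N s M ⇑g)| :=
    habs.eventually (eventually_ge_nhds (by linarith))
  have htail : Summable (tTail s.1 ⇑f ⇑g) :=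
    tTail_summable s.1 (B_summable f) (B_summable g)
  have hbnd : ∀ᶠ n in atTop,
      (frakM N s.1 M n)⁻¹ ≤ tTail s.1 ⇑f ⇑g n / (|D| / 2) := by
    filter_upwards [hev] with n hn
    have hDb := Dn_bound hdiag h0 ⇑f ⇑g n
    have hprod : |D| / 2 ≤ frakM N s.1 M n * tTail s.1 ⇑f ⇑g n := hn.trans hDb
    have hfM : 0 < frakM N s.1 M n := by
      rcases (frakM_nonneg s.1 M n).lt_or_eq with h | h
      · exact h
      · exfalso
        rw [← h, zero_mul] at hprod
        linarith
    rw [le_div_iff₀ (by linarith : (0:ℝ) < |D| / 2)]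
    calc (frakM N s.1 M n)⁻¹ * (|D| / 2)
        ≤ (frakM N s.1 M n)⁻¹ * (frakM N s.1 M n * tTail s.1 ⇑f ⇑g n) :=
          mul_le_mul_of_nonneg_left hprod (inv_nonneg.2 hfM.le)
      _ = tTail s.1 ⇑f ⇑g n := by
          rw [← mul_assoc, inv_mul_cancel₀ hfM.ne', one_mul]
  obtain ⟨N₀, hN₀⟩ := Filter.eventually_atTop.1 hbnd
  have hsummbnd : Summable (fun n => tTail s.1 ⇑f ⇑g (n + N₀) / (|D| / 2)) :=
    ((summable_nat_add_iff N₀).2 htail).div_const _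
  have hshift : Summable (fun n => (frakM N s.1 M (n + N₀))⁻¹) :=
    Summable.of_nonneg_of_le (fun n => inv_nonneg.2 (frakM_nonneg s.1 M _))
      (fun n => hN₀ (n + N₀) (by omega)) hsummbnd
  exact (summable_nat_add_iff N₀).1 hshift

theorem inner_lp_eq (F G : lp (fun _ : Σ n, Mon N n => ℝ) 2) :
    ⟪F, G⟫ = ∑' x : Σ n, Mon N n, F x * G x := by
  rw [lp.inner_eq_tsum]
  exact tsum_congr fun x => by
    rw [RCLike.inner_apply, starRingEnd_apply, star_trivial, mul_comm]

theorem inner_mk_eq {h : (Σ n, Mon N n) → ℝ}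
    (hmem : h ∈ lp (fun _ : Σ n, Mon N n => ℝ) 2)
    (G : lp (fun _ : Σ n, Mon N n => ℝ) 2) :
    ⟪(⟨h, hmem⟩ : lp (fun _ : Σ n, Mon N n => ℝ) 2), G⟫ = ∑' x : Σ n, Mon N n, h x * G x :=
  inner_lp_eq ⟨h, hmem⟩ G

theorem Jsingle {s : GIdx N} {M : (n' j : ℕ) → Matrix (Mon N n') (Mon N j) ℝ}
    (h0 : ∀ n' j : ℕ, (j < n' ∨ n' + s.1 < j) → M n' j = 0)
    (x y : Σ n, Mon N n) :
    Jfun N s M (⇑(lp.single 2 x (1:ℝ))) y = K M y x := by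
  rw [Jexpand h0 _ y (by omega : y.1 + s.1 ≤ y.1 + s.1 + x.1)]
  rw [Finset.sum_sigma']
  rw [Finset.sum_eq_single x]
  · rw [lp.single_apply_self, mul_one]
  · intro p _ hp
    rw [lp.single_apply_ne 2 x _ hp, mul_zero]
  · intro hx
    exfalso
    apply hx
    simp only [Finset.mem_sigma, Finset.mem_range, Finset.mem_univ, and_true]
    omega

theorem Jsingle_mem {s : GIdx N} {M : (n' j : ℕ) → Matrix (Mon N n') (Mon N j) ℝ}
    (h0 : ∀ n' j : ℕ, (j < n' ∨ n' + s.1 < j) → M n' j = 0)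
    (x : Σ n, Mon N n) :
    Memℓp (Jfun N s M (⇑(lp.single 2 x (1:ℝ)))) 2 := by
  apply Memℓp.of_exponent_ge (q := 0) _ (zero_le)
  apply memℓp_zero
  apply Set.Finite.subset
    (Finset.finite_toSet ((Finset.range (x.1 + s.1 + 1)).sigma
      fun _ => (Finset.univ : Finset (Mon N _))))
  intro y hy
  simp only [Set.mem_setOf_eq] at hy
  simp only [Finset.coe_sigma, Finset.coe_range]
  by_contra hmem
  apply hy
  rw [Jsingle h0 x y]
  apply K_zero h0
  right
  simp only [Set.mem_sigma_iff, Set.mem_Iio, Finset.mem_coe, Finset.mem_univ,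
    and_true] at hmem
  omega

theorem adjoint_main {s : GIdx N} {M : (n' j : ℕ) → Matrix (Mon N n') (Mon N j) ℝ}
    (hdiag : ∀ n (a b : Mon N n), M n n a b = M n n b a)
    (h0 : ∀ n' j : ℕ, (j < n' ∨ n' + s.1 < j) → M n' j = 0)
    (g g' : lp (fun _ : Σ n, Mon N n => ℝ) 2)
    (hadj : ∀ (f : lp (fun _ : Σ n, Mon N n => ℝ) 2)
      (hf : Jfun N s M ⇑f ∈ lp (fun _ : Σ n, Mon N n => ℝ) 2),
      ⟪(⟨Jfun N s M ⇑f, hf⟩ : lp (fun _ : Σ n, Mon N n => ℝ) 2), g⟫ = ⟪f, g'⟫) :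
    ∃ hg : Jfun N s M ⇑g ∈ lp (fun _ : Σ n, Mon N n => ℝ) 2,
      (⟨Jfun N s M ⇑g, hg⟩ : lp (fun _ : Σ n, Mon N n => ℝ) 2) = g' := by
  have hpt : ∀ x : Σ n, Mon N n, Jfun N s M ⇑g x = g' x := by
    intro x
    have hmem := Jsingle_mem (M := M) h0 x
    have heq := hadj (lp.single 2 x (1:ℝ)) hmem
    rw [lp.inner_single_left, RCLike.inner_apply, starRingEnd_apply, star_trivial,
      mul_one] at heq
    replace heq := (inner_mk_eq hmem g).symm.trans heq
    have hco : ∀ y : Σ n, Mon N n,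
        Jfun N s M (⇑(lp.single 2 x (1:ℝ))) y * g y = K M x y * g y := by
      intro y
      rw [Jsingle h0 x y, K_symm hdiag]
    rw [tsum_congr hco] at heq
    set S : Finset (Σ n, Mon N n) :=
      (Finset.range (x.1 + s.1 + 1)).sigma fun _ => (Finset.univ : Finset (Mon N _)) with hSdef
    have hsupp : ∀ y : Σ n, Mon N n, y ∉ S → K M x y * g y = 0 := by
      intro y hy
      rw [K_zero h0 _, zero_mul]
      left
      simp only [hSdef, Finset.mem_sigma, Finset.mem_range, Finset.mem_univ,
        and_true] at hy
      omega
    rw [tsum_eq_sum hsupp] at heq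
    have hJ : Jfun N s M ⇑g x = ∑ y ∈ S, K M x y * g y := by
      rw [Jexpand h0 _ x le_rfl, Finset.sum_sigma']
    rw [hJ, ← heq]
  have hfun : Jfun N s M ⇑g = ⇑g' := funext hpt
  refine ⟨by rw [hfun]; exact lp.memℓp g', ?_⟩
  exact lp.ext hfun

end Jaux

section
variable (N : ℕ → ℕ) [∀ k, Fintype (Mon N k)]

/-- Under the Carleman-type condition `Σ_n 1/𝔐_{n,m,i} = ∞`, the
Jacobi operator `J_{m,i}` is symmetric and in fact self-adjoint on its natural domain
`{f ∈ ℓ² : J f ∈ ℓ²}`. -/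
theorem jacobi_selfAdjoint (hN0 : N 0 = 0)
    (p : (n : ℕ) → Mon N n → MvPolynomial (GIdx N) ℝ)
    (ℒ : MvPolynomial (GIdx N) ℝ →ₗ[ℝ] ℝ)
    -- `{p_n}` is orthonormal with respect to `ℒ`
    (horth : ∀ (n : ℕ) (a b : Mon N n), ℒ (p n a * p n b) = if a = b then 1 else 0)
    (horth' : ∀ n k : ℕ, n ≠ k → ∀ (a : Mon N n) (b : Mon N k), ℒ (p n a * p k b) = 0)
    (s : GIdx N) (M : (n' j : ℕ) → Matrix (Mon N n') (Mon N j) ℝ)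
    (hrec : RecurrenceON N p s M)
    (hCarleman : ¬ Summable fun n : ℕ => (frakM N s.1 M n)⁻¹) :
    -- `J` is symmetric on its natural domain ...
    (∀ (f g : lp (fun _ : Σ n, Mon N n => ℝ) 2)
      (hf : Jfun N s M ⇑f ∈ lp (fun _ : Σ n, Mon N n => ℝ) 2)
      (hg : Jfun N s M ⇑g ∈ lp (fun _ : Σ n, Mon N n => ℝ) 2),
      ⟪(⟨Jfun N s M ⇑f, hf⟩ : lp (fun _ : Σ n, Mon N n => ℝ) 2), g⟫ =
      ⟪f, (⟨Jfun N s M ⇑g, hg⟩ : lp (fun _ : Σ n, Mon N n => ℝ) 2)⟫) ∧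
    -- ... and in fact self-adjoint: the adjoint does not extend it
    (∀ g g' : lp (fun _ : Σ n, Mon N n => ℝ) 2,
      (∀ (f : lp (fun _ : Σ n, Mon N n => ℝ) 2)
        (hf : Jfun N s M ⇑f ∈ lp (fun _ : Σ n, Mon N n => ℝ) 2),
        ⟪(⟨Jfun N s M ⇑f, hf⟩ : lp (fun _ : Σ n, Mon N n => ℝ) 2), g⟫ = ⟪f, g'⟫) →
      ∃ hg : Jfun N s M ⇑g ∈ lp (fun _ : Σ n, Mon N n => ℝ) 2,
        (⟨Jfun N s M ⇑g, hg⟩ : lp (fun _ : Σ n, Mon N n => ℝ) 2) = g') := by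
  have hdiag : ∀ n (a b : Mon N n), M n n a b = M n n b a :=
    fun n a b => Jaux.Mdiag horth horth' hrec n a b
  have h0 := hrec.1
  constructor
  · exact fun f g hf hg => Jaux.symm_main hdiag h0 hCarleman f g hf hg
  · exact fun g g' hadj => Jaux.adjoint_main hdiag h0 g g' hadj

end
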